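/- Fix a positive integer n. Let k be a positive integer, a_1 ≤ a_2 ≤ ⋯ ≤ a_k nonnegative integers, and r a nonnegative integer with a_1 + k + r > n. Then Σ_{c_1+⋯+c_k = r} Σ_{π ∈ S_k} [a_1 + c_{π(1)}, …, a_k + c_{π(k)}] ∈ B, where the outer sum is over all k-tuples (c_1,…,c_k) of nonnegative integers summing to r. -/

import Mathlib

/-!
The free non-unital associative ring `Z = ℤ⟨x,y⟩⁺`, realized as the span of the
non-empty monomials inside the free (unital) algebra `W = ℤ⟨x,y⟩`, together with the
`ℤ`-submodule `B` from Section 3 of the paper.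
-/

/-- The free unital associative `ℤ`-algebra `W = ℤ⟨x,y⟩` on two generators. -/
abbrev W : Type := FreeAlgebra ℤ (Fin 2)

/-- The generator `x`. -/
noncomputable def Xg : W := FreeAlgebra.ι ℤ (0 : Fin 2)

/-- The generator `y`. -/
noncomputable def Yg : W := FreeAlgebra.ι ℤ (1 : Fin 2)

/-- `w` is a non-empty monomial (word) in `x, y`, i.e. `w ∈ M`. -/
def IsMonoW (w : W) : Prop :=
  ∃ l : List (Fin 2), l ≠ [] ∧ w = (l.map (FreeAlgebra.ι ℤ)).prod

/-- `Z = ℤ⟨x,y⟩⁺`, the free non-unital associative ring on `x, y`: the `ℤ`-span of the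
non-empty monomials inside `W`. -/
noncomputable def Zsub : Submodule ℤ W := Submodule.span ℤ {w | IsMonoW w}

/-- `[a_1,…,a_k] = x^{a_1} y x^{a_2} y ⋯ y x^{a_k}` (for `k = 0` this is `1`). -/
noncomputable def br {k : ℕ} (a : Fin k → ℕ) : W :=
  (List.intersperse Yg (List.ofFn fun i => Xg ^ (a i))).prod

/-- The `ℤ`-submodule `B` of `Z`: it is generated by the monomials `[a_1,…,a_k]`
(`k ≥ 1`) such that `a_i ≥ n` for some `i`, or `a_i = a_j` for some `i ≠ j`, together
with the elements `[a_1,…,a_k] + [a_1,…,a_k]^{(ij)}` for transpositions `(ij)`,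
`i ≠ j`. -/
noncomputable def Bsub (n : ℕ) : Submodule ℤ W :=
  Submodule.span ℤ
    ({w | ∃ (k : ℕ) (a : Fin k → ℕ), 0 < k ∧
        ((∃ i, n ≤ a i) ∨ ∃ i j : Fin k, i ≠ j ∧ a i = a j) ∧ w = br a} ∪
      {w | ∃ (k : ℕ) (a : Fin k → ℕ) (i j : Fin k), i ≠ j ∧
        w = br a + br (a ∘ Equiv.swap i j)})


open Finset

private def Tb {k : ℕ} (a b : Fin k → ℕ) : Finset (Fin k) :=
  Finset.univ.filter fun t => ∃ s, s < t ∧ a t ≤ b s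

private def Ib {k : ℕ} (a b : Fin k → ℕ) (j : Fin k) : Finset (Fin k) :=
  Finset.univ.filter fun s => s < j ∧ a j ≤ b s

private lemma mem_Tb {k : ℕ} {a b : Fin k → ℕ} {t : Fin k} :
    t ∈ Tb a b ↔ ∃ s, s < t ∧ a t ≤ b s := by
  simp only [Tb, Finset.mem_filter, Finset.mem_univ, true_and]

private lemma mem_Ib {k : ℕ} {a b : Fin k → ℕ} {j s : Fin k} :
    s ∈ Ib a b j ↔ s < j ∧ a j ≤ b s := by
  simp only [Ib, Finset.mem_filter, Finset.mem_univ, true_and]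

private lemma Ib_nonempty {k : ℕ} {a b : Fin k → ℕ} (h : (Tb a b).Nonempty) :
    (Ib a b ((Tb a b).max' h)).Nonempty := by
  have hj := (Tb a b).max'_mem h
  rw [mem_Tb] at hj
  obtain ⟨s, hs1, hs2⟩ := hj
  exact ⟨s, mem_Ib.mpr ⟨hs1, hs2⟩⟩

private noncomputable def jIdx {k : ℕ} (a b : Fin k → ℕ) (h : (Tb a b).Nonempty) : Fin k :=
  (Tb a b).max' h

private noncomputable def iIdx {k : ℕ} (a b : Fin k → ℕ) (h : (Tb a b).Nonempty) : Fin k :=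
  (Ib a b (jIdx a b h)).max' (Ib_nonempty h)

private lemma iIdx_mem {k : ℕ} (a b : Fin k → ℕ) (h : (Tb a b).Nonempty) :
    iIdx a b h < jIdx a b h ∧ a (jIdx a b h) ≤ b (iIdx a b h) := by
  have := (Ib a b (jIdx a b h)).max'_mem (Ib_nonempty h)
  rwa [mem_Ib] at this

private lemma jIdx_max {k : ℕ} (a b : Fin k → ℕ) (h : (Tb a b).Nonempty) {t s : Fin k}
    (hst : s < t) (hle : a t ≤ b s) : t ≤ jIdx a b h :=
  Finset.le_max' _ t (mem_Tb.mpr ⟨s, hst, hle⟩)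

private lemma iIdx_max {k : ℕ} (a b : Fin k → ℕ) (h : (Tb a b).Nonempty) {s : Fin k}
    (hs : s < jIdx a b h) (hle : a (jIdx a b h) ≤ b s) : s ≤ iIdx a b h :=
  Finset.le_max' _ s (mem_Ib.mpr ⟨hs, hle⟩)

private lemma iIdx_congr {k : ℕ} {a b b' : Fin k → ℕ} (hbb : b = b') (h : (Tb a b).Nonempty)
    (h' : (Tb a b').Nonempty) : iIdx a b h = iIdx a b' h' := by subst hbb; rfl

private lemma jIdx_congr {k : ℕ} {a b b' : Fin k → ℕ} (hbb : b = b') (h : (Tb a b).Nonempty)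
    (h' : (Tb a b').Nonempty) : jIdx a b h = jIdx a b' h' := by subst hbb; rfl

private lemma max'_congr {α : Type*} [LinearOrder α] {s t : Finset α} (h : s = t)
    (hs : s.Nonempty) (ht : t.Nonempty) : s.max' hs = t.max' ht := by subst h; rfl

/-- Invariance of the canonical pair under the canonical swap. -/
private lemma invar {k : ℕ} {a b : Fin k → ℕ} (h : (Tb a b).Nonempty) (hab : ∀ s, a s ≤ b s) :
    ∃ h' : (Tb a (b ∘ Equiv.swap (iIdx a b h) (jIdx a b h))).Nonempty,
      jIdx a (b ∘ Equiv.swap (iIdx a b h) (jIdx a b h)) h' = jIdx a b h ∧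
      iIdx a (b ∘ Equiv.swap (iIdx a b h) (jIdx a b h)) h' = iIdx a b h := by
  set i := iIdx a b h with hi
  set j := jIdx a b h with hj
  set b' : Fin k → ℕ := b ∘ Equiv.swap i j with hb'
  obtain ⟨hij, hji⟩ := iIdx_mem a b h
  have hb'i : b' i = b j := by simp [hb', Equiv.swap_apply_left]
  have hjmem : j ∈ Tb a b' := mem_Tb.mpr ⟨i, hij, by rw [hb'i]; exact hab j⟩
  have h' : (Tb a b').Nonempty := ⟨j, hjmem⟩
  have hjeq : jIdx a b' h' = j := by
    refine le_antisymm (Finset.max'_le _ _ _ ?_) (Finset.le_max' _ _ hjmem)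
    intro t ht
    rw [mem_Tb] at ht
    obtain ⟨s, hst, hle⟩ := ht
    by_contra hgt
    push_neg at hgt
    have hswlt : Equiv.swap i j s < t := by
      rcases eq_or_ne s i with rfl | hsi
      · rw [Equiv.swap_apply_left]; exact hgt
      rcases eq_or_ne s j with rfl | hsj
      · rw [Equiv.swap_apply_right]; exact hij.trans hgt
      · rw [Equiv.swap_apply_of_ne_of_ne hsi hsj]; exact hst
    exact absurd (jIdx_max a b h hswlt hle) (not_le.mpr hgt)
  refine ⟨h', hjeq, ?_⟩
  have himem : i ∈ Ib a b' j := mem_Ib.mpr ⟨hij, by rw [hb'i]; exact hab j⟩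
  have hIbne : (Ib a b' j).Nonempty := ⟨i, himem⟩
  have heq : iIdx a b' h' = (Ib a b' j).max' hIbne :=
    max'_congr (congrArg (Ib a b') hjeq) (Ib_nonempty h') hIbne
  rw [heq]
  refine le_antisymm (Finset.max'_le _ _ _ ?_) (Finset.le_max' _ _ himem)
  intro s hs
  rw [mem_Ib] at hs
  obtain ⟨hsj, hle⟩ := hs
  rcases eq_or_ne s i with rfl | hsi
  · exact le_refl _
  have hsj' : s ≠ j := ne_of_lt hsj
  have hbs : b' s = b s := by simp [hb', Equiv.swap_apply_of_ne_of_ne hsi hsj']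
  rw [hbs] at hle
  exact iIdx_max a b h hsj hle

open Classical in
/-- The sign-reversing involution on tuples `c`. -/
private noncomputable def invC {k : ℕ} (a c : Fin k → ℕ) : Fin k → ℕ :=
  if h : (Tb a (fun s => a s + c s)).Nonempty then
    fun s =>
      (a (Equiv.swap (iIdx a (fun s => a s + c s) h) (jIdx a (fun s => a s + c s) h) s) +
        c (Equiv.swap (iIdx a (fun s => a s + c s) h) (jIdx a (fun s => a s + c s) h) s)) - a s
  else c

private lemma invC_of_not {k : ℕ} {a c : Fin k → ℕ}
    (h : ¬ (Tb a (fun s => a s + c s)).Nonempty) : invC a c = c := by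
  rw [invC, dif_neg h]

private lemma invC_spec {k : ℕ} {a c : Fin k → ℕ} (ha : Monotone a)
    (h : (Tb a (fun s => a s + c s)).Nonempty) :
    ∃ i j : Fin k, i < j ∧
      ((fun s => a s + invC a c s) = (fun s => a s + c s) ∘ Equiv.swap i j) ∧
      invC a (invC a c) = c := by
  set b : Fin k → ℕ := fun s => a s + c s with hb
  set i := iIdx a b h with hi
  set j := jIdx a b h with hj
  obtain ⟨hij, hji⟩ := iIdx_mem a b h
  have hab : ∀ s, a s ≤ b s := fun s => Nat.le_add_right _ _
  have key : ∀ s, a s ≤ b (Equiv.swap i j s) := by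
    intro s
    rcases eq_or_ne s i with rfl | hsi
    · rw [Equiv.swap_apply_left]; exact le_trans (ha hij.le) (hab j)
    rcases eq_or_ne s j with rfl | hsj
    · rw [Equiv.swap_apply_right]; exact hji
    · rw [Equiv.swap_apply_of_ne_of_ne hsi hsj]; exact hab s
  have hinv1 : invC a c = fun s => b (Equiv.swap i j s) - a s := by
    rw [invC, dif_pos h]
  have hpt : (fun s => a s + invC a c s) = b ∘ Equiv.swap i j := by
    funext s
    rw [hinv1]
    exact Nat.add_sub_cancel' (key s)
  refine ⟨i, j, hij, hpt, ?_⟩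
  obtain ⟨h', hjeq, hieq⟩ := invar h hab
  have h'' : (Tb a (fun s => a s + invC a c s)).Nonempty := by rw [hpt]; exact h'
  have hinv2 : invC a (invC a c) =
      fun s => (fun t => a t + invC a c t)
        (Equiv.swap (iIdx a (fun t => a t + invC a c t) h'')
          (jIdx a (fun t => a t + invC a c t) h'') s) - a s := by
    rw [invC, dif_pos h'']
  have hiq : iIdx a (fun t => a t + invC a c t) h'' = i := (iIdx_congr hpt h'' h').trans hieq
  have hjq : jIdx a (fun t => a t + invC a c t) h'' = j := (jIdx_congr hpt h'' h').trans hjeq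
  rw [hinv2]
  funext s
  rw [hiq, hjq]
  have hval : (fun t => a t + invC a c t) ((Equiv.swap i j) s)
      = b ((Equiv.swap i j) ((Equiv.swap i j) s)) := congrFun hpt _
  rw [hval, Equiv.swap_apply_self]
  show a s + c s - a s = c s
  exact Nat.add_sub_cancel_left _ _

/-- Key counting lemma: a "non-swappable" tuple forces `n ≥ a 0 + k + r`. -/
private lemma Tb_nonempty_key {n r m : ℕ} {a b : Fin (m + 1) → ℕ}
    (hab : ∀ s, a s ≤ b s) (hbn : ∀ s, b s < n)
    (hsum : ∑ s, b s = (∑ s, a s) + r) (hgt : n < a 0 + (m + 1) + r) :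
    (Tb a b).Nonempty := by
  by_contra hcon
  have hlt : ∀ t s : Fin (m + 1), s < t → b s < a t := by
    intro t s hst
    by_contra hle
    push_neg at hle
    exact hcon ⟨t, mem_Tb.mpr ⟨s, hst, hle⟩⟩
  have h1 : ∀ i : Fin m, b i.castSucc + 1 ≤ a i.succ := fun i =>
    hlt i.succ i.castSucc (Fin.castSucc_lt_succ (i := i))
  have h2 : b (Fin.last m) < n := hbn _
  have e1 : ∑ s, b s = (∑ i : Fin m, b i.castSucc) + b (Fin.last m) := Fin.sum_univ_castSucc b
  have e2 : ∑ s, a s = a 0 + ∑ i : Fin m, a i.succ := Fin.sum_univ_succ a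
  have e3 : (∑ i : Fin m, b i.castSucc) + m ≤ ∑ i : Fin m, a i.succ := by
    calc (∑ i : Fin m, b i.castSucc) + m = ∑ i : Fin m, (b i.castSucc + 1) := by
          rw [Finset.sum_add_distrib, Finset.sum_const, smul_eq_mul, mul_one, Finset.card_univ,
            Fintype.card_fin]
      _ ≤ _ := Finset.sum_le_sum fun i _ => h1 i
  omega

/-- **Lemma 3**: for `k ≥ 1`, `a_1 ≤ a_2 ≤ ⋯ ≤ a_k` and `r ≥ 0` with `a_1 + k + r > n`,
the sum `Σ_{c_1+⋯+c_k=r} Σ_{π ∈ S_k} [a_1 + c_{π(1)},…,a_k + c_{π(k)}]` belongs to `B`. -/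
theorem sum_mem_B_of_sorted (n : ℕ) (hn : 0 < n) (k : ℕ) (hk : 0 < k)
    (a : Fin k → ℕ) (ha : Monotone a) (r : ℕ) (h : n < a ⟨0, hk⟩ + k + r) :
    (∑ c ∈ Finset.Nat.antidiagonalTuple k r, ∑ π : Equiv.Perm (Fin k),
      br fun i => a i + c (π i)) ∈ Bsub n := by
  obtain ⟨m, rfl⟩ : ∃ m, k = m + 1 := ⟨k - 1, by omega⟩
  have h0 : a ⟨0, hk⟩ = a 0 := rfl
  rw [h0] at h
  rw [← Submodule.Quotient.mk_eq_zero, ← Submodule.mkQ_apply, map_sum]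
  have hz1 : ∀ b : Fin (m + 1) → ℕ,
      ((∃ i, n ≤ b i) ∨ ∃ i j : Fin (m + 1), i ≠ j ∧ b i = b j) →
        (Bsub n).mkQ (br b) = 0 := by
    intro b hb
    rw [Submodule.mkQ_apply, Submodule.Quotient.mk_eq_zero]
    exact Submodule.subset_span (Set.mem_union_left _ ⟨m + 1, b, Nat.succ_pos m, hb, rfl⟩)
  have hz2 : ∀ (b : Fin (m + 1) → ℕ) (i j : Fin (m + 1)), i ≠ j →
      (Bsub n).mkQ (br b) + (Bsub n).mkQ (br (b ∘ Equiv.swap i j)) = 0 := by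
    intro b i j hne
    rw [← map_add, Submodule.mkQ_apply, Submodule.Quotient.mk_eq_zero]
    exact Submodule.subset_span (Set.mem_union_right _ ⟨m + 1, b, i, j, hne, rfl⟩)
  -- if the canonical swappable pair does not exist, the term vanishes
  have hfz : ∀ c ∈ Finset.Nat.antidiagonalTuple (m + 1) r,
      ¬ (Tb a (fun s => a s + c s)).Nonempty →
        (Bsub n).mkQ (br fun s => a s + c s) = 0 := by
    intro c hc hT
    by_cases hbig : ∃ s, n ≤ a s + c s
    · exact hz1 _ (Or.inl hbig)
    · exfalso
      push_neg at hbig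
      refine hT (Tb_nonempty_key (fun s => Nat.le_add_right _ _) hbig ?_ h)
      rw [Finset.sum_add_distrib]
      rw [Finset.Nat.mem_antidiagonalTuple] at hc
      rw [hc]
  -- the core cancellation, via the sign-reversing involution `invC a`
  have T0 : ∑ c ∈ Finset.Nat.antidiagonalTuple (m + 1) r,
      (Bsub n).mkQ (br fun s => a s + c s) = 0 := by
    apply Finset.sum_involution (fun c _ => invC a c)
    · intro c hc
      by_cases hT : (Tb a (fun s => a s + c s)).Nonempty
      · obtain ⟨i, j, hij, hpt, -⟩ := invC_spec ha hT
        rw [show (fun s => a s + invC a c s)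
            = (fun s => a s + c s) ∘ Equiv.swap i j from hpt]
        exact hz2 _ i j (ne_of_lt hij)
      · rw [invC_of_not hT, hfz c hc hT, add_zero]
    · intro c hc hfne
      by_cases hT : (Tb a (fun s => a s + c s)).Nonempty
      · obtain ⟨i, j, hij, hpt, -⟩ := invC_spec ha hT
        intro hcc
        apply hfne
        apply hz1
        right
        refine ⟨i, j, ne_of_lt hij, ?_⟩
        have h1 := congrFun hpt i
        rw [hcc] at h1
        simpa [Equiv.swap_apply_left] using h1
      · exact absurd (hfz c hc hT) hfne
    · intro c hc
      rw [Finset.Nat.mem_antidiagonalTuple] at hc ⊢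
      by_cases hT : (Tb a (fun s => a s + c s)).Nonempty
      · obtain ⟨i, j, hij, hpt, -⟩ := invC_spec ha hT
        have hsum : ∑ s, (a s + invC a c s) = ∑ s, (a s + c s) := by
          calc ∑ s, (a s + invC a c s)
              = ∑ s, ((fun s => a s + c s) (Equiv.swap i j s)) :=
                Finset.sum_congr rfl fun s _ => congrFun hpt s
            _ = ∑ s, (a s + c s) := Equiv.sum_comp (Equiv.swap i j) (fun s => a s + c s)
        rw [Finset.sum_add_distrib, Finset.sum_add_distrib] at hsum
        omega
      · rw [invC_of_not hT]; exact hc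
    · intro c hc
      by_cases hT : (Tb a (fun s => a s + c s)).Nonempty
      · obtain ⟨-, -, -, -, hdouble⟩ := invC_spec ha hT
        exact hdouble
      · rw [invC_of_not hT, invC_of_not hT]
  simp only [map_sum]
  rw [Finset.sum_comm]
  refine Finset.sum_eq_zero fun π _ => ?_
  rw [← T0]
  refine Finset.sum_nbij' (fun c => c ∘ ⇑π) (fun c => c ∘ ⇑π.symm) ?_ ?_ ?_ ?_ ?_
  · intro c hc
    rw [Finset.Nat.mem_antidiagonalTuple] at hc ⊢
    rw [← hc]
    exact Equiv.sum_comp π c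
  · intro c hc
    rw [Finset.Nat.mem_antidiagonalTuple] at hc ⊢
    rw [← hc]
    exact Equiv.sum_comp π.symm c
  · intro c _
    funext s
    simp
  · intro c _
    funext s
    simp
  · intro c _
    rfl
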